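/- Let m > n ≥ 3 be integers. Then there exists a constant C > 0 such that for all real T > 0 and all y ∈ ℝ^m with |y| ≥ 1: ∫_{{x ∈ ℝ^m : |x| ≥ 1, |x−y| ≥ 2T}} ∫_0^T ∫_0^∞ ( |x|^{m-2} |y|^{m-2} (s + t + |x| + |y|)^{n+2} )^{-1} ds dt dx ≤ C. -/

import Mathlib

open MeasureTheory

lemma lint_shift {p : ℝ} (hp : p < -1) {b : ℝ} (hb : 0 < b) :
    ∫⁻ s in Set.Ioi (0:ℝ), ENNReal.ofReal ((s + b) ^ p) =
      ENNReal.ofReal (b ^ (p + 1) / (-(p + 1))) := by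
  have hmeas : Measurable fun u : ℝ => ENNReal.ofReal (u ^ p) :=
    (measurable_id.pow_const p).ennreal_ofReal
  have h1 : ∫⁻ s in Set.Ioi (0:ℝ), ENNReal.ofReal ((s + b) ^ p)
      = ∫⁻ u in Set.Ioi b, ENNReal.ofReal (u ^ p) := by
    conv_rhs => rw [← map_add_right_eq_self volume b]
    rw [setLIntegral_map measurableSet_Ioi hmeas (measurable_add_const b)]
    congr 1
    ext u
    simp
  rw [h1]
  have hInt : IntegrableOn (fun u : ℝ => u ^ p) (Set.Ioi b) :=
    integrableOn_Ioi_rpow_of_lt hp hb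
  have hnn : 0 ≤ᵐ[volume.restrict (Set.Ioi b)] fun u : ℝ => u ^ p := by
    filter_upwards [ae_restrict_mem measurableSet_Ioi] with u hu
    exact Real.rpow_nonneg (le_of_lt (hb.trans hu)) p
  rw [← ofReal_integral_eq_lintegral_ofReal hInt hnn, integral_Ioi_rpow_of_lt hp hb]
  rw [neg_div, div_neg]

theorem E2_estimate (m n : ℕ) (hn : 3 ≤ n) (hmn : n < m) :
    ∃ C > 0, ∀ T : ℝ, 0 < T → ∀ y : EuclideanSpace ℝ (Fin m), 1 ≤ ‖y‖ →
      ∫⁻ x in {x : EuclideanSpace ℝ (Fin m) | 1 ≤ ‖x‖ ∧ 2 * T ≤ ‖x - y‖},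
        ∫⁻ t in Set.Ioo (0 : ℝ) T,
          ∫⁻ s in Set.Ioi (0 : ℝ),
            ENNReal.ofReal
              ((‖x‖ ^ (m - 2) * ‖y‖ ^ (m - 2) * (s + t + ‖x‖ + ‖y‖) ^ (n + 2))⁻¹) ≤
        ENNReal.ofReal C := by
  classical
  set E := EuclideanSpace ℝ (Fin m)
  have hm2 : ((m - 2 : ℕ) : ℝ) = (m : ℝ) - 2 := by
    have h2m : 2 ≤ m := by omega
    push_cast [Nat.cast_sub h2m]
    ring
  have hnr : (3 : ℝ) ≤ (n : ℝ) := by exact_mod_cast hn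
  set qr : ℝ := ((m - 2 : ℕ) : ℝ) + (n : ℝ) with hqr
  have hqr0 : 0 < qr := by rw [hqr]; positivity
  have hq : (Module.finrank ℝ E : ℝ) < qr := by
    have : Module.finrank ℝ E = m := finrank_euclideanSpace_fin
    rw [this, hqr, hm2]
    linarith
  have hInt1 : Integrable (fun x : E => (1 + ‖x‖) ^ (-qr)) :=
    integrable_one_add_norm hq
  set I : ℝ := ∫ x : E, (1 + ‖x‖) ^ (-qr) with hI
  have hI0 : 0 ≤ I := integral_nonneg fun x =>
    Real.rpow_nonneg (by positivity) _
  set c₀ : ℝ := (n : ℝ)⁻¹ * ((n : ℝ) + 1)⁻¹ with hc₀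
  have hc₀0 : 0 ≤ c₀ := by positivity
  refine ⟨c₀ * (2 : ℝ) ^ qr * I + 1, by positivity, ?_⟩
  intro T hT y hy
  set S : Set E := {x : E | 1 ≤ ‖x‖ ∧ 2 * T ≤ ‖x - y‖} with hS
  -- auxiliary exact integrals
  have hs_int : ∀ b : ℝ, 0 < b →
      (∫⁻ s in Set.Ioi (0:ℝ), ENNReal.ofReal ((s + b) ^ (-((n:ℝ) + 2)))) =
        ENNReal.ofReal (((n:ℝ) + 1)⁻¹) * ENNReal.ofReal (b ^ (-((n:ℝ) + 1))) := by
    intro b hb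
    rw [lint_shift (by linarith) hb,
      show -((n:ℝ) + 2) + 1 = -((n:ℝ) + 1) by ring,
      show -(-((n:ℝ) + 1)) = (n:ℝ) + 1 by ring,
      div_eq_inv_mul, ENNReal.ofReal_mul (by positivity)]
  have ht_int : ∀ b : ℝ, 0 < b →
      (∫⁻ t in Set.Ioi (0:ℝ), ENNReal.ofReal ((t + b) ^ (-((n:ℝ) + 1)))) =
        ENNReal.ofReal ((n:ℝ)⁻¹) * ENNReal.ofReal (b ^ (-(n:ℝ))) := by
    intro b hb
    rw [lint_shift (by linarith) hb,
      show -((n:ℝ) + 1) + 1 = -(n:ℝ) by ring,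
      show -(-(n:ℝ)) = (n:ℝ) by ring,
      div_eq_inv_mul, ENNReal.ofReal_mul (by positivity)]
  -- per-x bound
  have key : ∀ x : E, 1 ≤ ‖x‖ →
      (∫⁻ t in Set.Ioo (0 : ℝ) T, ∫⁻ s in Set.Ioi (0 : ℝ),
        ENNReal.ofReal
          ((‖x‖ ^ (m - 2) * ‖y‖ ^ (m - 2) * (s + t + ‖x‖ + ‖y‖) ^ (n + 2))⁻¹)) ≤
      ENNReal.ofReal (c₀ * ‖x‖ ^ (-qr)) := by
    intro x hx
    set a : ℝ := ‖x‖ with ha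
    have ha0 : (0 : ℝ) < a := lt_of_lt_of_le one_pos hx
    calc ∫⁻ t in Set.Ioo (0 : ℝ) T, ∫⁻ s in Set.Ioi (0 : ℝ),
            ENNReal.ofReal
              ((a ^ (m - 2) * ‖y‖ ^ (m - 2) * (s + t + a + ‖y‖) ^ (n + 2))⁻¹)
        ≤ ∫⁻ t in Set.Ioo (0 : ℝ) T, ∫⁻ s in Set.Ioi (0 : ℝ),
            ENNReal.ofReal (a ^ (-((m - 2 : ℕ) : ℝ))) *
              ENNReal.ofReal ((s + (t + a)) ^ (-((n:ℝ) + 2))) := by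
          refine lintegral_mono_ae ?_
          filter_upwards [ae_restrict_mem measurableSet_Ioo] with t ht
          refine lintegral_mono_ae ?_
          filter_upwards [ae_restrict_mem measurableSet_Ioi] with s hs
          have ht' : (0:ℝ) < t := ht.1
          have hs' : (0:ℝ) < s := hs
          have hst : (0:ℝ) < s + (t + a) := by linarith
          rw [← ENNReal.ofReal_mul (Real.rpow_nonneg ha0.le _)]
          refine ENNReal.ofReal_le_ofReal ?_
          have hy0 : (0:ℝ) < ‖y‖ := lt_of_lt_of_le one_pos hy
          have hy1 : (1:ℝ) ≤ ‖y‖ ^ (m - 2) := one_le_pow₀ hy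
          have hA : (0:ℝ) < a ^ (m - 2) := pow_pos ha0 _
          have e2 : (s + (t + a)) ^ (n + 2) ≤ (s + t + a + ‖y‖) ^ (n + 2) :=
            pow_le_pow_left₀ hst.le (by linarith) _
          have hbig : a ^ (m - 2) * (s + (t + a)) ^ (n + 2)
              ≤ a ^ (m - 2) * ‖y‖ ^ (m - 2) * (s + t + a + ‖y‖) ^ (n + 2) :=
            mul_le_mul (le_mul_of_one_le_right hA.le hy1) e2
              (pow_nonneg hst.le _) (by positivity)
          have hpos : (0:ℝ) < a ^ (m - 2) * (s + (t + a)) ^ (n + 2) :=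
            mul_pos hA (pow_pos hst _)
          have hinv : (a ^ (m - 2) * ‖y‖ ^ (m - 2) * (s + t + a + ‖y‖) ^ (n + 2))⁻¹
              ≤ (a ^ (m - 2) * (s + (t + a)) ^ (n + 2))⁻¹ := by
            gcongr
          refine hinv.trans (le_of_eq ?_)
          rw [mul_inv,
            ← Real.rpow_natCast a (m - 2), ← Real.rpow_neg ha0.le,
            ← Real.rpow_natCast (s + (t + a)) (n + 2), ← Real.rpow_neg hst.le]
          push_cast
          ring_nf
      _ ≤ ∫⁻ t in Set.Ioi (0 : ℝ), ∫⁻ s in Set.Ioi (0 : ℝ),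
            ENNReal.ofReal (a ^ (-((m - 2 : ℕ) : ℝ))) *
              ENNReal.ofReal ((s + (t + a)) ^ (-((n:ℝ) + 2))) :=
          lintegral_mono_set Set.Ioo_subset_Ioi_self
      _ = ∫⁻ t in Set.Ioi (0 : ℝ),
            ENNReal.ofReal (a ^ (-((m - 2 : ℕ) : ℝ))) * ENNReal.ofReal (((n:ℝ) + 1)⁻¹) *
              ENNReal.ofReal ((t + a) ^ (-((n:ℝ) + 1))) := by
          refine setLIntegral_congr_fun measurableSet_Ioi (fun t ht => ?_)
          have ht' : (0:ℝ) < t := ht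
          rw [lintegral_const_mul' _ _ ENNReal.ofReal_ne_top, hs_int (t + a) (by linarith)]
          ring
      _ = ENNReal.ofReal (a ^ (-((m - 2 : ℕ) : ℝ))) * ENNReal.ofReal (((n:ℝ) + 1)⁻¹) *
            (ENNReal.ofReal ((n:ℝ)⁻¹) * ENNReal.ofReal (a ^ (-(n:ℝ)))) := by
          rw [lintegral_const_mul' _ _ (by finiteness), ht_int a ha0]
      _ ≤ ENNReal.ofReal (c₀ * a ^ (-qr)) := by
          refine le_of_eq ?_
          rw [← ENNReal.ofReal_mul (Real.rpow_nonneg ha0.le _),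
            ← ENNReal.ofReal_mul (by positivity),
            ← ENNReal.ofReal_mul (by positivity)]
          congr 1
          have h3 : a ^ (-((m - 2 : ℕ) : ℝ)) * a ^ (-(n:ℝ)) = a ^ (-qr) := by
            rw [← Real.rpow_add ha0, hqr]; ring_nf
          rw [hc₀, ← h3]; ring
  -- assemble
  have hSm : MeasurableSet S := by
    refine MeasurableSet.inter ?_ ?_
    · exact measurableSet_le measurable_const measurable_norm
    · exact measurableSet_le measurable_const ((measurable_id.sub_const y).norm)
  have step1 : (∫⁻ x in S, ∫⁻ t in Set.Ioo (0 : ℝ) T, ∫⁻ s in Set.Ioi (0 : ℝ),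
        ENNReal.ofReal
          ((‖x‖ ^ (m - 2) * ‖y‖ ^ (m - 2) * (s + t + ‖x‖ + ‖y‖) ^ (n + 2))⁻¹)) ≤
      ∫⁻ x in S, ENNReal.ofReal (c₀ * (2:ℝ) ^ qr * (1 + ‖x‖) ^ (-qr)) := by
    refine lintegral_mono_ae ?_
    filter_upwards [ae_restrict_mem hSm] with x hxS
    refine (key x hxS.1).trans (ENNReal.ofReal_le_ofReal ?_)
    have hx := hxS.1
    have hx0 : (0:ℝ) < ‖x‖ := lt_of_lt_of_le one_pos hx
    have hbound : ‖x‖ ^ (-qr) ≤ (2:ℝ) ^ qr * (1 + ‖x‖) ^ (-qr) := by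
      have h2x : (1 + ‖x‖) / 2 ≤ ‖x‖ := by linarith
      have hhalf : (0:ℝ) < (1 + ‖x‖) / 2 := by positivity
      have h1 : ‖x‖ ^ (-qr) ≤ ((1 + ‖x‖) / 2) ^ (-qr) :=
        Real.rpow_le_rpow_of_nonpos hhalf h2x (by linarith)
      have h2 : ((1 + ‖x‖) / 2 : ℝ) ^ (-qr) = (1 + ‖x‖) ^ (-qr) * ((2:ℝ)⁻¹) ^ (-qr) := by
        rw [div_eq_mul_inv, Real.mul_rpow (by positivity) (by norm_num)]
      have h3 : ((2:ℝ)⁻¹) ^ (-qr) = (2:ℝ) ^ qr := by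
        rw [Real.inv_rpow (by norm_num), ← Real.rpow_neg (by norm_num), neg_neg]
      refine h1.trans (le_of_eq ?_)
      rw [h2, h3]; ring
    calc c₀ * ‖x‖ ^ (-qr) ≤ c₀ * ((2:ℝ) ^ qr * (1 + ‖x‖) ^ (-qr)) :=
          mul_le_mul_of_nonneg_left hbound hc₀0
      _ = c₀ * (2:ℝ) ^ qr * (1 + ‖x‖) ^ (-qr) := by ring
  refine step1.trans ?_
  have step2 : (∫⁻ x in S, ENNReal.ofReal (c₀ * (2:ℝ) ^ qr * (1 + ‖x‖) ^ (-qr))) ≤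
      ∫⁻ x : E, ENNReal.ofReal (c₀ * (2:ℝ) ^ qr * (1 + ‖x‖) ^ (-qr)) :=
    lintegral_mono' Measure.restrict_le_self le_rfl
  refine step2.trans ?_
  have step3 : (∫⁻ x : E, ENNReal.ofReal (c₀ * (2:ℝ) ^ qr * (1 + ‖x‖) ^ (-qr))) =
      ENNReal.ofReal (c₀ * (2:ℝ) ^ qr) * ENNReal.ofReal I := by
    rw [hI, ofReal_integral_eq_lintegral_ofReal hInt1
      (ae_of_all _ fun x => Real.rpow_nonneg (by positivity) _),
      ← lintegral_const_mul' _ _ ENNReal.ofReal_ne_top]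
    congr 1
    ext x
    rw [← ENNReal.ofReal_mul (by positivity)]
  rw [step3, ← ENNReal.ofReal_mul (by positivity)]
  refine ENNReal.ofReal_le_ofReal ?_
  linarith
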